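/- Let H be a graph with maximum degree Δ ≥ 1, let W be an upper bound on the size of every minimal witness against BUC(H), and let c > 1 and ε > 0. Let G̃ be a graph on N vertices whose vertex set is partitioned into clusters V^i_j (grouped into groups V^i = ⋃_j V^i_j) and a set L such that: every vertex of L is isolated in G̃; G̃ has no edges between distinct groups; any two vertices in the same cluster have identical neighborhoods in G̃; and every cluster satisfies εN/(16Δ) < |V^i_j| ≤ 2cεN. Suppose G̃ is (ε/8)-close to the set of graphs of maximum degree at most 2cεN and is (3ε/8)-far from BUC(H). Then there exist at least 1/(16Wc²ε) pairwise disjoint sets W̃₁, W̃₂, …, each of which is a union of at most W clusters belonging to a single group, such that for each k the subgraph of G̃ induced by W̃_k is not a blow-up collection of H. -/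

import Mathlib

open SimpleGraph

/-- `G` is a blow-up of `H`. -/
def IsBlowUp {α β : Type*} (H : SimpleGraph β) (G : SimpleGraph α) : Prop :=
  ∃ f : α → β, ∀ u v : α, G.Adj u v ↔ H.Adj (f u) (f v)

/-- `G` is a blow-up collection of `H`. -/
def IsBlowUpCollection {α β : Type*} (H : SimpleGraph β) (G : SimpleGraph α) : Prop :=
  ∃ P : α → ℕ, (∀ u v : α, G.Adj u v → P u = P v) ∧
    ∀ n : ℕ, IsBlowUp H (G.induce {v | P v = n})

/-- edit distance between two graphs on the same vertex set -/
noncomputable def graphDist {α : Type*} (G G' : SimpleGraph α) : ℕ :=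
  (symmDiff G.edgeSet G'.edgeSet).ncard

lemma isBlowUp_comap {α α' β : Type*} {H : SimpleGraph β} {G : SimpleGraph α}
    {G' : SimpleGraph α'} (φ : α' → α) (hφ : ∀ u v, G'.Adj u v ↔ G.Adj (φ u) (φ v)) :
    IsBlowUp H G → IsBlowUp H G' := by
  rintro ⟨f, hf⟩; exact ⟨f ∘ φ, fun u v => (hφ u v).trans (hf _ _)⟩

lemma buc_comap {α α' β : Type*} {H : SimpleGraph β} {G : SimpleGraph α}
    {G' : SimpleGraph α'} (φ : α' → α) (hφ : ∀ u v, G'.Adj u v ↔ G.Adj (φ u) (φ v)) :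
    IsBlowUpCollection H G → IsBlowUpCollection H G' := by
  rintro ⟨P, hP, hcl⟩
  refine ⟨P ∘ φ, fun u v h => hP _ _ ((hφ u v).1 h), fun n => ?_⟩
  refine isBlowUp_comap (G := G.induce {v | P v = n})
    (fun x => ⟨φ x.1, x.2⟩) (fun u v => ?_) (hcl n)
  simpa [comap_adj] using hφ u.1 v.1

lemma buc_of_isolated {α β : Type*} (H : SimpleGraph β) [Nonempty β] (G : SimpleGraph α)
    (hiso : ∀ u v, ¬ G.Adj u v) : IsBlowUpCollection H G := by
  obtain ⟨b⟩ := ‹Nonempty β›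
  refine ⟨fun _ => 0, fun u v h => absurd h (hiso u v), fun n => ⟨fun _ => b, fun u v => ?_⟩⟩
  simp only [comap_adj]
  exact iff_of_false (hiso _ _) (H.irrefl)

lemma buc_assemble {α β : Type*} (H : SimpleGraph β) [Nonempty β]
    (G : SimpleGraph α) (q : α → Option ℕ)
    (hnone : ∀ v, q v = none → ∀ u, ¬ G.Adj v u)
    (hsame : ∀ u v, G.Adj u v → q u = q v)
    (hcls : ∀ i : ℕ, IsBlowUpCollection H (G.induce {v | q v = some i})) :
    IsBlowUpCollection H G := by
  obtain ⟨b⟩ := ‹Nonempty β›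
  choose Pc hPc hclc using hcls
  classical
  set P : α → ℕ := fun v =>
    if h : ∃ i, q v = some i then 2 * Nat.pair h.choose (Pc h.choose ⟨v, h.choose_spec⟩) + 1
    else 0 with hPdef
  have hPsome : ∀ v i (hv : q v = some i), P v = 2 * Nat.pair i (Pc i ⟨v, hv⟩) + 1 := by
    intro v i hv
    have hex : ∃ i, q v = some i := ⟨i, hv⟩
    have hch : hex.choose = i := (Option.some_inj.1 (hv.symm.trans hex.choose_spec)).symm
    subst hch
    simp only [hPdef, dif_pos hex]
  have hPnone : ∀ v, q v = none → P v = 0 := by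
    intro v hv
    have : ¬ ∃ i, q v = some i := by simp [hv]
    simp only [hPdef, dif_neg this]
  refine ⟨P, ?_, ?_⟩
  · intro u v huv
    rcases hu : q u with _ | i
    · exact absurd huv (hnone u hu v)
    · have hv : q v = some i := (hsame u v huv).symm.trans hu
      rw [hPsome u i hu, hPsome v i hv]
      have : Pc i ⟨u, hu⟩ = Pc i ⟨v, hv⟩ := hPc i ⟨u, hu⟩ ⟨v, hv⟩ huv
      rw [this]
  · intro n
    rcases Nat.even_or_odd n with he | ho
    · refine ⟨fun _ => b, fun u v => ?_⟩
      have hu : q u.1 = none := by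
        rcases hq : q u.1 with _ | i
        · rfl
        · exfalso
          have h2 := u.2
          simp only [Set.mem_setOf_eq] at h2
          rw [hPsome u.1 i hq] at h2
          rw [Nat.even_iff] at he
          omega
      simp only [comap_adj]
      exact iff_of_false (fun h => hnone u.1 hu v.1 h) H.irrefl
    · obtain ⟨k, hk⟩ := ho
      have hmem : ∀ v : α, P v = n →
          ∃ hv : q v = some k.unpair.1, Pc k.unpair.1 ⟨v, hv⟩ = k.unpair.2 := by
        intro v hv
        have hq1 : q v = some k.unpair.1 := by
          rcases hq : q v with _ | i'
          · rw [hPnone v hq] at hv; omega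
          · rw [hPsome v i' hq] at hv
            have hpair : Nat.pair i' (Pc i' ⟨v, hq⟩) = k := by omega
            congr 1
            rw [← hpair, Nat.unpair_pair]
        refine ⟨hq1, ?_⟩
        rw [hPsome v k.unpair.1 hq1] at hv
        have hpair : Nat.pair k.unpair.1 (Pc k.unpair.1 ⟨v, hq1⟩) = k := by omega
        conv_rhs => rw [← hpair, Nat.unpair_pair]
      refine isBlowUp_comap
        (G := (G.induce {v | q v = some k.unpair.1}).induce {w | Pc k.unpair.1 w = k.unpair.2})
        (fun x => ⟨⟨x.1, (hmem x.1 x.2).1⟩, (hmem x.1 x.2).2⟩) (fun u v => ?_)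
        (hclc k.unpair.1 k.unpair.2)
      simp [comap_adj]

lemma exists_minimal_witness {V β : Type*} [Fintype V] (H : SimpleGraph β) (G : SimpleGraph V)
    (A : Set V) (hA : ¬ IsBlowUpCollection H (G.induce A)) :
    ∃ S : Set V, S ⊆ A ∧ ¬ IsBlowUpCollection H (G.induce S) ∧
      ∀ S' : Set V, S' ⊂ S → IsBlowUpCollection H (G.induce S') := by
  classical
  set 𝒮 : Set (Finset V) :=
    {s | ↑s ⊆ A ∧ ¬ IsBlowUpCollection H (G.induce (↑s : Set V))} with h𝒮
  have hne : 𝒮.Nonempty := by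
    refine ⟨A.toFinite.toFinset, ?_, ?_⟩
    · rw [Set.Finite.coe_toFinset]
    · rw [Set.Finite.coe_toFinset]; exact hA
  obtain ⟨s, hs, hmin⟩ := Set.exists_min_image 𝒮 Finset.card (Set.toFinite _) hne
  refine ⟨↑s, hs.1, hs.2, fun S' hS' => ?_⟩
  by_contra hbad
  have hfin : S'.Finite := Set.toFinite _
  have hsub : hfin.toFinset ⊆ s := by
    intro x hx
    rw [Set.Finite.mem_toFinset] at hx
    exact_mod_cast hS'.subset hx
  have hssub : hfin.toFinset ⊂ s := by
    refine lt_of_le_of_ne hsub ?_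
    intro h
    apply hS'.ne
    rw [← Set.Finite.coe_toFinset hfin, h]
  have hmem : hfin.toFinset ∈ 𝒮 := by
    constructor
    · rw [Set.Finite.coe_toFinset]; exact hS'.subset.trans hs.1
    · rw [Set.Finite.coe_toFinset]; exact hbad
  have := hmin _ hmem
  exact absurd (Finset.card_lt_card hssub) (not_lt.2 this)

lemma ncard_biUnion_le {ι α : Type*} [Finite α] (s : Finset ι) (f : ι → Set α) :
    (⋃ i ∈ s, f i).ncard ≤ ∑ i ∈ s, (f i).ncard := by
  classical
  induction s using Finset.induction with
  | empty => simp
  | insert _ _ h ih =>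
      rw [Finset.sum_insert h, Finset.set_biUnion_insert]
      exact le_trans (Set.ncard_union_le _ _) (by omega)

/-- Lemma 4 (many distinct witnesses): Let `G̃` be a graph on `N` vertices partitioned into
clusters `V^i_j` (encoded by `P`; leftovers labelled `none`) satisfying the structural
conclusions of the blow-up construction lemma, with every cluster of size at most `2cεN`.
If `G̃` is `ε/8`-close to having maximum degree `2cεN` and `3ε/8`-far from `BUC(H)`, and `W`
bounds the size of every minimal witness against `BUC(H)`, then there are at least
`1/(16Wc²ε)` pairwise disjoint sets, each a union of at most `W` clusters of a single group,
each of which induces a subgraph of `G̃` that is not a blow-up collection of `H`. -/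
theorem many_distinct_witnesses {V β : Type*} [Fintype V] [Fintype β]
    (H : SimpleGraph β) [DecidableRel H.Adj] (hΔ : 1 ≤ H.maxDegree)
    (W : ℕ)
    (hW : ∀ (n : ℕ) (G : SimpleGraph (Fin n)) (S : Set (Fin n)),
      ¬ IsBlowUpCollection H (G.induce S) →
      (∀ S' : Set (Fin n), S' ⊂ S → IsBlowUpCollection H (G.induce S')) →
      S.ncard ≤ W)
    (c ε : ℝ) (hc : 1 < c) (hε : 0 < ε)
    (Gt : SimpleGraph V) (N : ℕ) (hN : N = Fintype.card V)
    (P : V → Option (ℕ × ℕ))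
    -- leftover vertices are isolated in G̃
    (h1 : ∀ v : V, P v = none → Gt.neighborSet v = ∅)
    -- no edges of G̃ between distinct groups
    (h2 : ∀ (u v : V) (i j i' j' : ℕ), P u = some (i, j) → P v = some (i', j') → i ≠ i' →
      ¬ Gt.Adj u v)
    -- vertices of a common cluster have identical G̃-neighborhoods
    (h3 : ∀ (u v : V) (p : ℕ × ℕ), P u = some p → P v = some p →
      Gt.neighborSet u = Gt.neighborSet v)
    -- every (nonempty) cluster has more than εN/(16Δ) and at most 2cεN vertices
    (h4 : ∀ p : ℕ × ℕ, {v : V | P v = some p}.Nonempty →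
      ε * N / (16 * (H.maxDegree : ℝ)) < (({v : V | P v = some p}).ncard : ℝ) ∧
      (({v : V | P v = some p}).ncard : ℝ) ≤ 2 * c * ε * N)
    -- G̃ is ε/8-close to having maximum degree 2cεN
    (hLD : ∃ G' : SimpleGraph V, (∀ v : V, ((G'.neighborSet v).ncard : ℝ) ≤ 2 * c * ε * N) ∧
      (graphDist Gt G' : ℝ) ≤ ε / 8 * N ^ 2)
    -- G̃ is 3ε/8-far from BUC(H)
    (hfar : ∀ G' : SimpleGraph V, IsBlowUpCollection H G' →
      3 * ε / 8 * N ^ 2 < (graphDist Gt G' : ℝ)) :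
    ∃ (M : ℕ) (Ws : Fin M → Set V),
      1 / (16 * (W : ℝ) * c ^ 2 * ε) ≤ (M : ℝ) ∧
      (∀ k l : Fin M, k ≠ l → Disjoint (Ws k) (Ws l)) ∧
      (∀ k : Fin M, ∃ (i : ℕ) (J : Finset ℕ), J.card ≤ W ∧
        Ws k = {v : V | ∃ j ∈ J, P v = some (i, j)}) ∧
      (∀ k : Fin M, ¬ IsBlowUpCollection H (Gt.induce (Ws k))) := by
  classical
  have hβ : Nonempty β := by
    by_contra hb
    rw [not_nonempty_iff] at hb
    have : H.maxDegree = 0 := by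
      simp [SimpleGraph.maxDegree, Finset.univ_eq_empty]
    omega
  by_cases hW0 : W = 0
  · refine ⟨0, fun _ => ∅, ?_, fun k => k.elim0, fun k => k.elim0, fun k => k.elim0⟩
    norm_num [hW0]
  rcases Nat.eq_zero_or_pos N with hN0 | hNpos
  · exfalso
    have hVempty : IsEmpty V := by
      rw [hN0] at hN; exact Fintype.card_eq_zero_iff.mp hN.symm
    have hbuc : IsBlowUpCollection H Gt :=
      buc_of_isolated H Gt (fun u _ _ => hVempty.false u)
    have hlt := hfar Gt hbuc
    rw [hN0] at hlt
    simp only [graphDist, symmDiff_self] at hlt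
    norm_num at hlt
  have hNR : (0:ℝ) < N := by exact_mod_cast hNpos
  have hW1 : 1 ≤ W := Nat.one_le_iff_ne_zero.2 hW0
  have hWR : (0:ℝ) < (W:ℝ) := by exact_mod_cast hW1
  have hc0 : (0:ℝ) < c := lt_trans one_pos hc
  have hcε : (0:ℝ) < 2*c*ε*N := by positivity
  set x : ℝ := 1 / (16 * (W : ℝ) * c ^ 2 * ε) with hxdef
  set M := ⌈x⌉₊ with hMdef
  have hclSize : ∀ p : ℕ × ℕ, (({v : V | P v = some p}).ncard : ℝ) ≤ 2*c*ε*N := by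
    intro p
    rcases Set.eq_empty_or_nonempty {v : V | P v = some p} with he | hne
    · rw [he]; simp; positivity
    · exact (h4 p hne).2
  have main : ∀ m : ℕ, m ≤ M → ∃ Ws : Fin m → Set V,
      (∀ k l, k ≠ l → Disjoint (Ws k) (Ws l)) ∧
      (∀ k, ∃ (i : ℕ) (J : Finset ℕ), J.card ≤ W ∧
        Ws k = {v : V | ∃ j ∈ J, P v = some (i, j)}) ∧
      (∀ k, ¬ IsBlowUpCollection H (Gt.induce (Ws k))) := by
    intro m
    induction m with
    | zero => exact fun _ => ⟨fun _ => ∅, fun k => k.elim0, fun k => k.elim0, fun k => k.elim0⟩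
    | succ m ih =>
      intro hm1
      obtain ⟨Ws, hdisj, hstruct, hwit⟩ := ih (Nat.le_of_succ_le hm1)
      have hmx : (m:ℝ) < x := Nat.lt_ceil.mp (Nat.lt_of_succ_le hm1)
      set T : Set V := ⋃ k, Ws k with hT
      have hTP : ∀ u v : V, P u = P v → u ∈ T → v ∈ T := by
        intro u v hPuv hu
        rw [hT, Set.mem_iUnion] at hu ⊢
        obtain ⟨k, hk⟩ := hu
        obtain ⟨i, J, hJ, hWk⟩ := hstruct k
        rw [hWk] at hk
        obtain ⟨j, hj, hPu⟩ := hk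
        refine ⟨k, ?_⟩
        rw [hWk]
        exact ⟨j, hj, by rw [← hPuv]; exact hPu⟩
      have hWsize : ∀ k, ((Ws k).ncard : ℝ) ≤ W * (2*c*ε*N) := by
        intro k
        obtain ⟨i, J, hJ, hWk⟩ := hstruct k
        have hWk2 : Ws k = ⋃ j ∈ J, {v : V | P v = some (i,j)} := by
          rw [hWk]; ext v; simp
        rw [hWk2]
        calc ((⋃ j ∈ J, {v : V | P v = some (i,j)}).ncard : ℝ)
            ≤ ∑ j ∈ J, (({v : V | P v = some (i,j)}).ncard : ℝ) := by
              exact_mod_cast ncard_biUnion_le J _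
          _ ≤ ∑ _j ∈ J, (2*c*ε*N) := Finset.sum_le_sum (fun j _ => hclSize (i,j))
          _ = J.card * (2*c*ε*N) := by rw [Finset.sum_const, nsmul_eq_mul]
          _ ≤ W * (2*c*ε*N) := by
              have hJc : (J.card : ℝ) ≤ (W : ℝ) := by exact_mod_cast hJ
              exact mul_le_mul_of_nonneg_right hJc (le_of_lt hcε)
      have hTsize : (T.ncard : ℝ) ≤ m * (W * (2*c*ε*N)) := by
        have hTu : T = ⋃ k ∈ (Finset.univ : Finset (Fin m)), Ws k := by simp [hT]
        calc (T.ncard : ℝ) ≤ ∑ k ∈ (Finset.univ : Finset (Fin m)), ((Ws k).ncard : ℝ) := by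
              rw [hTu]; exact_mod_cast ncard_biUnion_le _ _
          _ ≤ ∑ _k ∈ (Finset.univ : Finset (Fin m)), (W * (2*c*ε*N)) :=
              Finset.sum_le_sum fun k _ => hWsize k
          _ = m * (W * (2*c*ε*N)) := by
              rw [Finset.sum_const, Finset.card_univ, Fintype.card_fin, nsmul_eq_mul]
      have hTc : ¬ IsBlowUpCollection H (Gt.induce (Tᶜ : Set V)) := by
        intro hB
        set G' : SimpleGraph V :=
          { Adj := fun u v => Gt.Adj u v ∧ u ∉ T ∧ v ∉ T
            symm := ⟨by rintro u v ⟨h, hu, hv⟩; exact ⟨h.symm, hv, hu⟩⟩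
            loopless := ⟨fun v h => Gt.irrefl h.1⟩ } with hG'
        have hG'adj : ∀ u v : V, G'.Adj u v ↔ Gt.Adj u v ∧ u ∉ T ∧ v ∉ T := fun u v => Iff.rfl
        have hmemTc : ∀ y : V, (if y ∈ T then none else some 0 : Option ℕ) = some 0 → y ∈ Tᶜ := by
          intro y hy
          by_cases h : y ∈ T
          · rw [if_pos h] at hy; exact absurd hy (by simp)
          · exact h
        have hG'buc : IsBlowUpCollection H G' := by
          apply buc_assemble H G' (fun v => if v ∈ T then none else some 0)
          · intro v hv u hadj
            by_cases h : v ∈ T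
            · exact hadj.2.1 h
            · rw [if_neg h] at hv; exact Option.some_ne_none _ hv
          · intro u v hadj
            rw [if_neg hadj.2.1, if_neg hadj.2.2]
          · intro i
            rcases Nat.eq_zero_or_pos i with rfl | hi
            · refine buc_comap (G := Gt.induce (Tᶜ : Set V))
                (fun y => ⟨y.1, hmemTc y.1 y.2⟩) (fun u v => ?_) hB
              simp only [comap_adj]
              exact ⟨fun h => h.1, fun h => ⟨h, hmemTc _ u.2, hmemTc _ v.2⟩⟩
            · refine buc_of_isolated H _ (fun u v h => ?_)
              have hu2 := u.2
              simp only [Set.mem_setOf_eq] at hu2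
              by_cases hmem : u.1 ∈ T
              · rw [if_pos hmem] at hu2; exact Option.some_ne_none _ hu2.symm
              · rw [if_neg hmem] at hu2
                have : (0:ℕ) = i := Option.some_inj.1 hu2
                omega
        have hlt := hfar G' hG'buc
        obtain ⟨G'', hdeg, hdist⟩ := hLD
        set A : Set (Sym2 V) := G''.edgeSet ∩ {e | ∃ v ∈ T, v ∈ e} with hAdef
        set B : Set (Sym2 V) := symmDiff Gt.edgeSet G''.edgeSet with hBdef
        have hD : symmDiff Gt.edgeSet G'.edgeSet ⊆ A ∪ B := by
          intro e he
          revert he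
          refine Sym2.inductionOn e ?_
          intro u v he
          rw [Set.mem_symmDiff] at he
          rcases he with ⟨heG, heG'⟩ | ⟨heG', heG⟩
          · rw [mem_edgeSet] at heG heG'
            have hMeet : u ∈ T ∨ v ∈ T := by
              by_contra hcon
              push_neg at hcon
              exact heG' ⟨heG, hcon.1, hcon.2⟩
            by_cases hG'' : s(u,v) ∈ G''.edgeSet
            · left
              refine ⟨hG'', ?_⟩
              rcases hMeet with h | h
              · exact ⟨u, h, by simp⟩
              · exact ⟨v, h, by simp⟩
            · right
              rw [hBdef, Set.mem_symmDiff]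
              exact Or.inl ⟨heG, hG''⟩
          · exact absurd ((mem_edgeSet _).mp heG').1 ((mem_edgeSet _).not.mp heG)
        have hBcard : (B.ncard : ℝ) ≤ ε / 8 * N ^ 2 := hdist
        have hcard : (graphDist Gt G' : ℝ) ≤ (A.ncard : ℝ) + (B.ncard : ℝ) := by
          have h5 : (symmDiff Gt.edgeSet G'.edgeSet).ncard ≤ (A ∪ B).ncard :=
            Set.ncard_le_ncard hD (Set.toFinite _)
          have h6 := Set.ncard_union_le A B
          have : graphDist Gt G' ≤ A.ncard + B.ncard := le_trans h5 h6
          exact_mod_cast this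
        have hA : (A.ncard : ℝ) ≤ (T.ncard : ℝ) * (2*c*ε*N) := by
          have hsub : A ⊆ ⋃ v ∈ T.toFinite.toFinset, G''.incidenceSet v := by
            rintro e ⟨heE, v, hvT, hve⟩
            apply Set.mem_biUnion (by rwa [Set.Finite.mem_toFinset] : v ∈ T.toFinite.toFinset)
            exact ⟨heE, hve⟩
          calc (A.ncard : ℝ)
              ≤ ((⋃ v ∈ T.toFinite.toFinset, G''.incidenceSet v).ncard : ℝ) := by
                exact_mod_cast Set.ncard_le_ncard hsub (Set.toFinite _)
            _ ≤ ∑ v ∈ T.toFinite.toFinset, ((G''.incidenceSet v).ncard : ℝ) := by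
                exact_mod_cast ncard_biUnion_le _ _
            _ ≤ ∑ _v ∈ T.toFinite.toFinset, (2*c*ε*N) := by
                refine Finset.sum_le_sum fun v _ => ?_
                have heq : (G''.incidenceSet v).ncard = (G''.neighborSet v).ncard := by
                  rw [← Nat.card_coe_set_eq, ← Nat.card_coe_set_eq]
                  exact Nat.card_congr (G''.incidenceSetEquivNeighborSet v)
                rw [heq]; exact hdeg v
            _ = T.toFinite.toFinset.card * (2*c*ε*N) := by rw [Finset.sum_const, nsmul_eq_mul]
            _ = (T.ncard : ℝ) * (2*c*ε*N) := by
                rw [Set.ncard_eq_toFinset_card T T.toFinite]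
        have hAbound : (A.ncard : ℝ) ≤ ((m : ℝ) * (W * (2*c*ε*N))) * (2*c*ε*N) :=
          hA.trans (mul_le_mul_of_nonneg_right hTsize (le_of_lt hcε))
        have hpos : (0:ℝ) < 16 * (W:ℝ) * c^2 * ε := by positivity
        have hm1' : (m:ℝ) * (16*(W:ℝ)*c^2*ε) < 1 := by
          rw [hxdef] at hmx
          exact (lt_div_iff₀ hpos).mp hmx
        have hstrict : ((m : ℝ) * (W * (2*c*ε*N))) * (2*c*ε*N) < ε/4 * N^2 := by
          have h5 : (m:ℝ) * (16*(W:ℝ)*c^2*ε) * (ε/4*N^2) < 1 * (ε/4*N^2) :=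
            mul_lt_mul_of_pos_right hm1' (by positivity)
          calc ((m : ℝ) * (W * (2*c*ε*N))) * (2*c*ε*N)
              = (m:ℝ) * (16*(W:ℝ)*c^2*ε) * (ε/4*N^2) := by ring
            _ < 1 * (ε/4*N^2) := h5
            _ = ε/4*N^2 := one_mul _
        have hfinal : (graphDist Gt G' : ℝ) < 3*ε/8*N^2 := by
          calc (graphDist Gt G' : ℝ) ≤ (A.ncard : ℝ) + (B.ncard : ℝ) := hcard
            _ ≤ ((m : ℝ) * (W * (2*c*ε*N))) * (2*c*ε*N) + ε/8*N^2 := add_le_add hAbound hBcard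
            _ < ε/4*N^2 + ε/8*N^2 := by linarith
            _ = 3*ε/8*N^2 := by ring
        have := hfar G' hG'buc
        linarith [this, hfinal]
      obtain ⟨S, hSsub, hSbad, hSmin⟩ := exists_minimal_witness H Gt Tᶜ hTc
      -- size bound via hW
      have hScard : S.ncard ≤ W := by
        set e : V ≃ Fin (Fintype.card V) := Fintype.equivFin V with hedef
        set G₀ : SimpleGraph (Fin (Fintype.card V)) := Gt.comap ⇑e.symm with hG₀
        have himg : e.symm '' (e '' S) = S := by
          ext v; simp
        have hbad0 : ¬ IsBlowUpCollection H (G₀.induce (e '' S)) := by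
          intro hB
          apply hSbad
          refine buc_comap (G := G₀.induce (e '' S))
            (fun y => ⟨e y.1, ⟨y.1, y.2, rfl⟩⟩) (fun u v => ?_) hB
          simp [hG₀, comap_adj]
        have hmin0 : ∀ S' : Set (Fin (Fintype.card V)), S' ⊂ e '' S →
            IsBlowUpCollection H (G₀.induce S') := by
          intro S' hS'
          have hss : e.symm '' S' ⊂ S := by
            rw [Set.ssubset_def] at hS' ⊢
            obtain ⟨hsub, hns⟩ := hS'
            constructor
            · rw [← himg]; exact Set.image_mono hsub
            · intro hcon
              apply hns
              intro y hy
              obtain ⟨v, hvS, rfl⟩ := hy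
              obtain ⟨z, hz, hzv⟩ := hcon hvS
              have hzz : e v = z := by rw [← hzv]; simp
              rw [hzz]; exact hz
          have hb := hSmin _ hss
          refine buc_comap (G := Gt.induce (e.symm '' S'))
            (fun y => ⟨e.symm y.1, ⟨y.1, y.2, rfl⟩⟩) (fun u v => ?_) hb
          simp [hG₀, comap_adj]
        have hkey := hW (Fintype.card V) G₀ (e '' S) hbad0 hmin0
        rwa [Set.ncard_image_of_injective S e.injective] at hkey
      -- S nonempty
      have hSne : S.Nonempty := by
        rcases Set.eq_empty_or_nonempty S with rfl | h
        · exfalso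
          exact hSbad (buc_of_isolated H _ (fun u v h => Set.notMem_empty _ u.2))
        · exact h
      -- group constancy
      have hgroup : ∃ i : ℕ, ∀ v ∈ S, ∃ j, P v = some (i, j) := by
        by_cases hconst : ∀ u ∈ S, ∀ w ∈ S, (P u).map Prod.fst = (P w).map Prod.fst
        · obtain ⟨v₀, hv₀⟩ := hSne
          rcases hP0 : P v₀ with _ | ⟨i, j⟩
          · exfalso
            apply hSbad
            refine buc_of_isolated H _ (fun u v huv => ?_)
            have hPu : P u.1 = none := by
              have hcu := hconst u.1 u.2 v₀ hv₀
              rw [hP0] at hcu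
              rcases hq : P u.1 with _ | p
              · rfl
              · rw [hq] at hcu; simp at hcu
            have hGt : Gt.Adj u.1 v.1 := huv
            have hmem : v.1 ∈ Gt.neighborSet u.1 := hGt
            rw [h1 u.1 hPu] at hmem
            exact hmem
          · refine ⟨i, fun v hv => ?_⟩
            have hcu := hconst v hv v₀ hv₀
            rw [hP0] at hcu
            rcases hq : P v with _ | ⟨i', j'⟩
            · rw [hq] at hcu; simp at hcu
            · rw [hq] at hcu
              simp only [Option.map_some, Option.some_inj] at hcu
              exact ⟨j', by rw [hcu]⟩
        · exfalso
          push_neg at hconst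
          obtain ⟨u₀, hu₀, w₀, hw₀, hne⟩ := hconst
          apply hSbad
          apply buc_assemble H (Gt.induce S) (fun v => (P v.1).map Prod.fst)
          · intro v hv u hadj
            have hPv : P v.1 = none := by
              rcases hq : P v.1 with _ | p
              · rfl
              · rw [hq] at hv; simp at hv
            have hGt : Gt.Adj v.1 u.1 := hadj
            have hmem : u.1 ∈ Gt.neighborSet v.1 := hGt
            rw [h1 v.1 hPv] at hmem
            exact hmem
          · intro u v hadj
            have hGt : Gt.Adj u.1 v.1 := hadj
            rcases hqu : P u.1 with _ | ⟨i, j⟩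
            · exfalso
              have hmem : v.1 ∈ Gt.neighborSet u.1 := hGt
              rw [h1 u.1 hqu] at hmem
              exact hmem
            · rcases hqv : P v.1 with _ | ⟨i', j'⟩
              · exfalso
                have hmem : u.1 ∈ Gt.neighborSet v.1 := hGt.symm
                rw [h1 v.1 hqv] at hmem
                exact hmem
              · have hii : i = i' := by
                  by_contra hii
                  exact h2 u.1 v.1 i j i' j' hqu hqv hii hGt
                simp [hii]
          · intro i
            set Si : Set V := {v | v ∈ S ∧ (P v).map Prod.fst = some i} with hSi
            have hSiss : Si ⊂ S := by
              constructor
              · exact fun v hv => hv.1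
              · intro hEq
                have hA' := (hEq hu₀).2
                have hB' := (hEq hw₀).2
                exact hne (hA'.trans hB'.symm)
            have hbuc := hSmin Si hSiss
            refine buc_comap (G := Gt.induce Si)
              (fun y => ⟨y.1.1, y.1.2, y.2⟩) (fun u v => ?_) hbuc
            simp [comap_adj]
      obtain ⟨i, hgroupi⟩ := hgroup
      set J : Finset ℕ := S.toFinite.toFinset.image (fun v => ((P v).getD (0,0)).2) with hJdef
      have hJcard : J.card ≤ W := by
        refine le_trans Finset.card_image_le ?_
        rw [← Set.ncard_eq_toFinset_card S S.toFinite]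
        exact hScard
      set Wt : Set V := {v : V | ∃ j ∈ J, P v = some (i, j)} with hWtdef
      have hSWt : S ⊆ Wt := by
        intro v hv
        obtain ⟨j, hj⟩ := hgroupi v hv
        refine ⟨j, ?_, hj⟩
        rw [hJdef]
        refine Finset.mem_image.2 ⟨v, by rwa [Set.Finite.mem_toFinset], ?_⟩
        simp [hj]
      have hWtbad : ¬ IsBlowUpCollection H (Gt.induce Wt) := by
        intro hB
        apply hSbad
        exact buc_comap (G := Gt.induce Wt) (fun y => ⟨y.1, hSWt y.2⟩)
          (fun u v => by simp [comap_adj]) hB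
      have hWtT : ∀ v ∈ Wt, v ∉ T := by
        rintro v ⟨j, hjJ, hPv⟩ hvT
        rw [hJdef] at hjJ
        obtain ⟨u, huS, hju⟩ := Finset.mem_image.1 hjJ
        rw [Set.Finite.mem_toFinset] at huS
        obtain ⟨j', hj'⟩ := hgroupi u huS
        rw [hj'] at hju
        simp only [Option.getD_some] at hju
        have hPu : P v = P u := by rw [hj', hPv, hju]
        exact hSsub huS (hTP v u hPu hvT)
      refine ⟨fun k => if h : (k:ℕ) < m then Ws ⟨k, h⟩ else Wt, ?_, ?_, ?_⟩
      · intro k l hkl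
        dsimp only
        by_cases hk : (k:ℕ) < m <;> by_cases hl : (l:ℕ) < m
        · rw [dif_pos hk, dif_pos hl]
          refine hdisj _ _ (fun hcon => hkl ?_)
          have hv' : (k:ℕ) = (l:ℕ) := congrArg Fin.val (Fin.mk.injEq _ _ _ _ ▸ hcon : (⟨(k:ℕ), hk⟩ : Fin m) = ⟨(l:ℕ), hl⟩) ▸ rfl
          exact Fin.ext hv'
        · rw [dif_pos hk, dif_neg hl]
          rw [Set.disjoint_right]
          intro v hvWt hvWs
          exact hWtT v hvWt (Set.mem_iUnion.2 ⟨⟨k, hk⟩, hvWs⟩)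
        · rw [dif_neg hk, dif_pos hl]
          rw [Set.disjoint_left]
          intro v hvWt hvWs
          exact hWtT v hvWt (Set.mem_iUnion.2 ⟨⟨l, hl⟩, hvWs⟩)
        · exfalso
          apply hkl
          have hk' : (k:ℕ) = m := by omega
          have hl' : (l:ℕ) = m := by omega
          exact Fin.ext (hk'.trans hl'.symm)
      · intro k
        dsimp only
        by_cases hk : (k:ℕ) < m
        · rw [dif_pos hk]; exact hstruct _
        · rw [dif_neg hk]; exact ⟨i, J, hJcard, rfl⟩
      · intro k
        dsimp only
        by_cases hk : (k:ℕ) < m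
        · rw [dif_pos hk]; exact hwit _
        · rw [dif_neg hk]; exact hWtbad
  obtain ⟨Ws, hd, hs, hw⟩ := main M le_rfl
  refine ⟨M, Ws, ?_, hd, hs, hw⟩
  rw [hMdef]
  exact le_trans (le_of_eq hxdef.symm) (Nat.le_ceil x)
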